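/- Let A be a DG Poisson Hopf algebra with bracket of degree 0 and antipode S. For all homogeneous a, b ∈ A: S(a_{(1)}){a_{(2)}, b} = -(-1)^{|b||a_{(2)}|}{S(a_{(1)}), b}a_{(2)} and {a, S(b_{(1)})}b_{(2)} = -(-1)^{|a||b_{(1)}|}S(b_{(1)}){a, b_{(2)}} (Sweedler notation with implicit sums). -/

import Mathlib

open TensorProduct

namespace DGPH

variable {k : Type} [Field k]

/-- The `n`-th graded piece of the induced grading on a tensor product of graded modules. -/
def tgrade {M N : Type} [AddCommGroup M] [Module k M] [AddCommGroup N] [Module k N]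
    (𝒜 : ℤ → Submodule k M) (ℬ : ℤ → Submodule k N) (n : ℤ) : Submodule k (M ⊗[k] N) :=
  ⨆ ij : {q : ℤ × ℤ // q.1 + q.2 = n},
    Submodule.span k
      (Set.image2 (fun a b => a ⊗ₜ[k] b) ((𝒜 ij.1.1 : Set M)) ((ℬ ij.1.2 : Set N)))

/-- Characterization of the Koszul-signed multiplication on a tensor product:
`(a ⊗ b)(a' ⊗ b') = (-1)^{|a'||b|} (a a') ⊗ (b b')`. -/
def KoszulMulChar {M N : Type} [AddCommGroup M] [Module k M] [AddCommGroup N] [Module k N]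
    (𝒜 : ℤ → Submodule k M) (ℬ : ℤ → Submodule k N)
    (mulM : M →ₗ[k] M →ₗ[k] M) (mulN : N →ₗ[k] N →ₗ[k] N)
    (μ : (M ⊗[k] N) →ₗ[k] (M ⊗[k] N) →ₗ[k] (M ⊗[k] N)) : Prop :=
  ∀ ⦃i j : ℤ⦄ (a : M) ⦃a' : M⦄ ⦃b : N⦄ (b' : N), a' ∈ 𝒜 i → b ∈ ℬ j →
    μ (a ⊗ₜ[k] b) (a' ⊗ₜ[k] b') = ((-1 : k) ^ (i * j)) • ((mulM a a') ⊗ₜ[k] (mulN b b'))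

/-- Characterization of the Koszul-signed Poisson bracket of degree `p` on a tensor product:
`{a⊗b, a'⊗b'} = (-1)^{(|a'|+p)|b|} {a,a'} ⊗ (bb') + (-1)^{(|b|+p)|a'|} (aa') ⊗ {b,b'}`. -/
def KoszulBracketChar {M N : Type} [AddCommGroup M] [Module k M] [AddCommGroup N] [Module k N]
    (𝒜 : ℤ → Submodule k M) (ℬ : ℤ → Submodule k N)
    (mulM : M →ₗ[k] M →ₗ[k] M) (mulN : N →ₗ[k] N →ₗ[k] N)
    (brM : M →ₗ[k] M →ₗ[k] M) (brN : N →ₗ[k] N →ₗ[k] N) (p : ℤ)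
    (β : (M ⊗[k] N) →ₗ[k] (M ⊗[k] N) →ₗ[k] (M ⊗[k] N)) : Prop :=
  ∀ ⦃i j : ℤ⦄ (a : M) ⦃a' : M⦄ ⦃b : N⦄ (b' : N), a' ∈ 𝒜 i → b ∈ ℬ j →
    β (a ⊗ₜ[k] b) (a' ⊗ₜ[k] b') =
      ((-1 : k) ^ ((i + p) * j)) • ((brM a a') ⊗ₜ[k] (mulN b b')) +
      ((-1 : k) ^ ((j + p) * i)) • ((mulM a a') ⊗ₜ[k] (brN b b'))

/-- Characterization of the Koszul-signed differential on a tensor product: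
`d(a ⊗ b) = d a ⊗ b + (-1)^{|a|} a ⊗ d b`. -/
def KoszulDiffChar {M N : Type} [AddCommGroup M] [Module k M] [AddCommGroup N] [Module k N]
    (𝒜 : ℤ → Submodule k M) (dM : M →ₗ[k] M) (dN : N →ₗ[k] N)
    (D : M ⊗[k] N →ₗ[k] M ⊗[k] N) : Prop :=
  ∀ ⦃i : ℤ⦄ ⦃a : M⦄ (b : N), a ∈ 𝒜 i →
    D (a ⊗ₜ[k] b) = (dM a) ⊗ₜ[k] b + ((-1 : k) ^ i) • (a ⊗ₜ[k] (dN b))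

/-- Characterization of the Koszul twist `T(a ⊗ b) = (-1)^{|a||b|} b ⊗ a`. -/
def KoszulTwistChar {M N : Type} [AddCommGroup M] [Module k M] [AddCommGroup N] [Module k N]
    (𝒜 : ℤ → Submodule k M) (ℬ : ℤ → Submodule k N)
    (T : M ⊗[k] N →ₗ[k] N ⊗[k] M) : Prop :=
  ∀ ⦃i j : ℤ⦄ ⦃a : M⦄ ⦃b : N⦄, a ∈ 𝒜 i → b ∈ ℬ j →
    T (a ⊗ₜ[k] b) = ((-1 : k) ^ (i * j)) • (b ⊗ₜ[k] a)

section Structures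

variable (k)
variable (M : Type) [AddCommGroup M] [Module k M]

/-- A `ℤ`-graded associative unital algebra, given by unbundled data. -/
structure IsGradedAlgebra (𝒜 : ℤ → Submodule k M) (mul : M →ₗ[k] M →ₗ[k] M) (one : M) :
    Prop where
  indep : iSupIndep 𝒜
  total : (⨆ i, 𝒜 i) = ⊤
  mul_mem : ∀ ⦃i j : ℤ⦄ ⦃a b : M⦄, a ∈ 𝒜 i → b ∈ 𝒜 j → mul a b ∈ 𝒜 (i + j)
  one_mem : one ∈ 𝒜 0
  mul_assoc : ∀ a b c : M, mul (mul a b) c = mul a (mul b c)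
  one_mul : ∀ a : M, mul one a = a
  mul_one : ∀ a : M, mul a one = a

/-- A differential graded algebra. -/
structure IsDGAlgebra (𝒜 : ℤ → Submodule k M) (mul : M →ₗ[k] M →ₗ[k] M) (one : M)
    (d : M →ₗ[k] M) extends IsGradedAlgebra k M 𝒜 mul one : Prop where
  d_mem : ∀ ⦃i : ℤ⦄ ⦃a : M⦄, a ∈ 𝒜 i → d a ∈ 𝒜 (i + 1)
  d_sq : ∀ a : M, d (d a) = 0
  d_mul : ∀ ⦃i : ℤ⦄ ⦃a : M⦄ (b : M), a ∈ 𝒜 i →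
    d (mul a b) = mul (d a) b + ((-1 : k) ^ i) • mul a (d b)

/-- A differential graded Poisson algebra with Poisson bracket of degree `p`. -/
structure IsDGPoisson (𝒜 : ℤ → Submodule k M) (mul : M →ₗ[k] M →ₗ[k] M) (one : M)
    (bracket : M →ₗ[k] M →ₗ[k] M) (d : M →ₗ[k] M) (p : ℤ)
    extends IsDGAlgebra k M 𝒜 mul one d : Prop where
  gcomm : ∀ ⦃i j : ℤ⦄ ⦃a b : M⦄, a ∈ 𝒜 i → b ∈ 𝒜 j →
    mul a b = ((-1 : k) ^ (i * j)) • mul b a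
  bracket_mem : ∀ ⦃i j : ℤ⦄ ⦃a b : M⦄, a ∈ 𝒜 i → b ∈ 𝒜 j → bracket a b ∈ 𝒜 (i + j + p)
  bracket_antisymm : ∀ ⦃i j : ℤ⦄ ⦃a b : M⦄, a ∈ 𝒜 i → b ∈ 𝒜 j →
    bracket a b = -(((-1 : k) ^ ((i + p) * (j + p))) • bracket b a)
  bracket_jacobi : ∀ ⦃i j : ℤ⦄ ⦃a b : M⦄ (c : M), a ∈ 𝒜 i → b ∈ 𝒜 j →
    bracket a (bracket b c) =
      bracket (bracket a b) c + ((-1 : k) ^ ((i + p) * (j + p))) • bracket b (bracket a c)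
  bracket_leibniz : ∀ ⦃i j : ℤ⦄ ⦃a b : M⦄ (c : M), a ∈ 𝒜 i → b ∈ 𝒜 j →
    bracket a (mul b c) =
      mul (bracket a b) c + ((-1 : k) ^ ((i + p) * j)) • mul b (bracket a c)
  d_bracket : ∀ ⦃i : ℤ⦄ ⦃a : M⦄ (b : M), a ∈ 𝒜 i →
    d (bracket a b) = bracket (d a) b + ((-1 : k) ^ (i + p)) • bracket a (d b)

/-- A `ℤ`-graded coalgebra, given by unbundled data. -/
structure IsGradedCoalgebra (𝒜 : ℤ → Submodule k M) (comul : M →ₗ[k] M ⊗[k] M)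
    (counit : M →ₗ[k] k) : Prop where
  comul_mem : ∀ ⦃i : ℤ⦄ ⦃a : M⦄, a ∈ 𝒜 i → comul a ∈ tgrade 𝒜 𝒜 i
  counit_zero : ∀ ⦃i : ℤ⦄ ⦃a : M⦄, a ∈ 𝒜 i → i ≠ 0 → counit a = 0
  coassoc : ∀ a : M,
    (TensorProduct.assoc k M M M) ((TensorProduct.map comul LinearMap.id) (comul a)) =
      (TensorProduct.map LinearMap.id comul) (comul a)
  counit_comul_left : ∀ a : M,
    (TensorProduct.lid k M) ((TensorProduct.map counit LinearMap.id) (comul a)) = a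
  counit_comul_right : ∀ a : M,
    (TensorProduct.rid k M) ((TensorProduct.map LinearMap.id counit) (comul a)) = a

/-- A `ℤ`-graded bialgebra (comultiplication is an algebra map for the Koszul-signed
multiplication on the tensor square). -/
structure IsGradedBialgebra (𝒜 : ℤ → Submodule k M) (mul : M →ₗ[k] M →ₗ[k] M) (one : M)
    (comul : M →ₗ[k] M ⊗[k] M) (counit : M →ₗ[k] k) : Prop where
  alg : IsGradedAlgebra k M 𝒜 mul one
  coalg : IsGradedCoalgebra k M 𝒜 comul counit
  comul_one : comul one = one ⊗ₜ[k] one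
  counit_one : counit one = 1
  counit_mul : ∀ a b : M, counit (mul a b) = counit a * counit b
  comul_mul : ∃ mul₂ : (M ⊗[k] M) →ₗ[k] (M ⊗[k] M) →ₗ[k] (M ⊗[k] M),
    KoszulMulChar 𝒜 𝒜 mul mul mul₂ ∧
      ∀ a b : M, comul (mul a b) = mul₂ (comul a) (comul b)

/-- A `ℤ`-graded Hopf algebra. -/
structure IsGradedHopf (𝒜 : ℤ → Submodule k M) (mul : M →ₗ[k] M →ₗ[k] M) (one : M)
    (comul : M →ₗ[k] M ⊗[k] M) (counit : M →ₗ[k] k) (S : M →ₗ[k] M) : Prop where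
  bialg : IsGradedBialgebra k M 𝒜 mul one comul counit
  antipode_mem : ∀ ⦃i : ℤ⦄ ⦃a : M⦄, a ∈ 𝒜 i → S a ∈ 𝒜 i
  antipode_left : ∀ a : M,
    TensorProduct.lift mul ((TensorProduct.map S LinearMap.id) (comul a)) = counit a • one
  antipode_right : ∀ a : M,
    TensorProduct.lift mul ((TensorProduct.map LinearMap.id S) (comul a)) = counit a • one

/-- `d` is a coderivation (with Koszul signs) and `ε ∘ d = 0`. -/
def CoderivationProp (𝒜 : ℤ → Submodule k M) (comul : M →ₗ[k] M ⊗[k] M)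
    (counit : M →ₗ[k] k) (d : M →ₗ[k] M) : Prop :=
  (∀ a : M, counit (d a) = 0) ∧
  ∃ D : M ⊗[k] M →ₗ[k] M ⊗[k] M, KoszulDiffChar 𝒜 d d D ∧
    ∀ a : M, comul (d a) = D (comul a)

/-- A differential graded bialgebra. -/
structure IsDGBialgebra (𝒜 : ℤ → Submodule k M) (mul : M →ₗ[k] M →ₗ[k] M) (one : M)
    (comul : M →ₗ[k] M ⊗[k] M) (counit : M →ₗ[k] k) (d : M →ₗ[k] M) : Prop where
  bialg : IsGradedBialgebra k M 𝒜 mul one comul counit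
  dga : IsDGAlgebra k M 𝒜 mul one d
  coderiv : CoderivationProp k M 𝒜 comul counit d

/-- A differential graded Hopf algebra. -/
structure IsDGHopf (𝒜 : ℤ → Submodule k M) (mul : M →ₗ[k] M →ₗ[k] M) (one : M)
    (comul : M →ₗ[k] M ⊗[k] M) (counit : M →ₗ[k] k) (d : M →ₗ[k] M) (S : M →ₗ[k] M) :
    Prop where
  dgbialg : IsDGBialgebra k M 𝒜 mul one comul counit d
  antipode_mem : ∀ ⦃i : ℤ⦄ ⦃a : M⦄, a ∈ 𝒜 i → S a ∈ 𝒜 i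
  antipode_left : ∀ a : M,
    TensorProduct.lift mul ((TensorProduct.map S LinearMap.id) (comul a)) = counit a • one
  antipode_right : ∀ a : M,
    TensorProduct.lift mul ((TensorProduct.map LinearMap.id S) (comul a)) = counit a • one

/-- A differential graded Poisson bialgebra (bracket of degree 0). -/
structure IsDGPoissonBialgebra (𝒜 : ℤ → Submodule k M) (mul : M →ₗ[k] M →ₗ[k] M) (one : M)
    (bracket : M →ₗ[k] M →ₗ[k] M) (d : M →ₗ[k] M)
    (comul : M →ₗ[k] M ⊗[k] M) (counit : M →ₗ[k] k) : Prop where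
  poisson : IsDGPoisson k M 𝒜 mul one bracket d 0
  dgbialg : IsDGBialgebra k M 𝒜 mul one comul counit d
  comul_bracket : ∃ br₂ : (M ⊗[k] M) →ₗ[k] (M ⊗[k] M) →ₗ[k] (M ⊗[k] M),
    KoszulBracketChar 𝒜 𝒜 mul mul bracket bracket 0 br₂ ∧
      ∀ a b : M, comul (bracket a b) = br₂ (comul a) (comul b)

/-- A differential graded Poisson Hopf algebra (bracket of degree 0). -/
structure IsDGPoissonHopf (𝒜 : ℤ → Submodule k M) (mul : M →ₗ[k] M →ₗ[k] M) (one : M)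
    (bracket : M →ₗ[k] M →ₗ[k] M) (d : M →ₗ[k] M)
    (comul : M →ₗ[k] M ⊗[k] M) (counit : M →ₗ[k] k) (S : M →ₗ[k] M) : Prop where
  toPoissonBialg : IsDGPoissonBialgebra k M 𝒜 mul one bracket d comul counit
  antipode_mem : ∀ ⦃i : ℤ⦄ ⦃a : M⦄, a ∈ 𝒜 i → S a ∈ 𝒜 i
  antipode_left : ∀ a : M,
    TensorProduct.lift mul ((TensorProduct.map S LinearMap.id) (comul a)) = counit a • one
  antipode_right : ∀ a : M,
    TensorProduct.lift mul ((TensorProduct.map LinearMap.id S) (comul a)) = counit a • one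

end Structures

/-- A homomorphism of differential graded algebras (unbundled data). -/
structure IsDGAlgHom {M N : Type} [AddCommGroup M] [Module k M] [AddCommGroup N] [Module k N]
    (𝒜 : ℤ → Submodule k M) (mulM : M →ₗ[k] M →ₗ[k] M) (oneM : M) (dM : M →ₗ[k] M)
    (ℬ : ℤ → Submodule k N) (mulN : N →ₗ[k] N →ₗ[k] N) (oneN : N) (dN : N →ₗ[k] N)
    (f : M →ₗ[k] N) : Prop where
  map_mem : ∀ ⦃i : ℤ⦄ ⦃a : M⦄, a ∈ 𝒜 i → f a ∈ ℬ i
  map_one : f oneM = oneN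
  map_mul : ∀ a b : M, f (mulM a b) = mulN (f a) (f b)
  map_d : ∀ a : M, f (dM a) = dN (f a)

/-- A homomorphism of differential graded Poisson algebras. -/
structure IsDGPoissonHom {M N : Type} [AddCommGroup M] [Module k M] [AddCommGroup N] [Module k N]
    (𝒜 : ℤ → Submodule k M) (mulM : M →ₗ[k] M →ₗ[k] M) (oneM : M)
    (brM : M →ₗ[k] M →ₗ[k] M) (dM : M →ₗ[k] M)
    (ℬ : ℤ → Submodule k N) (mulN : N →ₗ[k] N →ₗ[k] N) (oneN : N)
    (brN : N →ₗ[k] N →ₗ[k] N) (dN : N →ₗ[k] N)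
    (f : M →ₗ[k] N)
    extends IsDGAlgHom 𝒜 mulM oneM dM ℬ mulN oneN dN f : Prop where
  map_bracket : ∀ a b : M, f (brM a b) = brN (f a) (f b)

/-- `(E, m, h)` is the universal enveloping algebra of the DG Poisson algebra
`(A, 𝒜, mulA, oneA, brA, dA)` with bracket of degree `p`. -/
structure IsUEA {A E : Type} [AddCommGroup A] [Module k A] [AddCommGroup E] [Module k E]
    (𝒜 : ℤ → Submodule k A) (mulA : A →ₗ[k] A →ₗ[k] A) (oneA : A)
    (brA : A →ₗ[k] A →ₗ[k] A) (dA : A →ₗ[k] A) (p : ℤ)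
    (ℰ : ℤ → Submodule k E) (mulE : E →ₗ[k] E →ₗ[k] E) (oneE : E) (dE : E →ₗ[k] E)
    (m h : A →ₗ[k] E) : Prop where
  dga : IsDGAlgebra k E ℰ mulE oneE dE
  m_hom : IsDGAlgHom 𝒜 mulA oneA dA ℰ mulE oneE dE m
  h_mem : ∀ ⦃i : ℤ⦄ ⦃a : A⦄, a ∈ 𝒜 i → h a ∈ ℰ (i + p)
  h_d : ∀ a : A, h (dA a) = dE (h a)
  h_lie : ∀ ⦃i j : ℤ⦄ ⦃a b : A⦄, a ∈ 𝒜 i → b ∈ 𝒜 j →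
    h (brA a b) = mulE (h a) (h b) - ((-1 : k) ^ ((i + p) * (j + p))) • mulE (h b) (h a)
  m_bracket : ∀ ⦃i j : ℤ⦄ ⦃a b : A⦄, a ∈ 𝒜 i → b ∈ 𝒜 j →
    m (brA a b) = mulE (h a) (m b) - ((-1 : k) ^ ((i + p) * j)) • mulE (m b) (h a)
  h_mul : ∀ ⦃i j : ℤ⦄ ⦃a b : A⦄, a ∈ 𝒜 i → b ∈ 𝒜 j →
    h (mulA a b) = mulE (m a) (h b) + ((-1 : k) ^ (i * j)) • mulE (m b) (h a)
  universal : ∀ (D : Type) [AddCommGroup D] [Module k D]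
    (𝒟 : ℤ → Submodule k D) (mulD : D →ₗ[k] D →ₗ[k] D) (oneD : D) (dD : D →ₗ[k] D)
    (f g : A →ₗ[k] D),
    IsDGAlgebra k D 𝒟 mulD oneD dD →
    IsDGAlgHom 𝒜 mulA oneA dA 𝒟 mulD oneD dD f →
    (∀ ⦃i : ℤ⦄ ⦃a : A⦄, a ∈ 𝒜 i → g a ∈ 𝒟 (i + p)) →
    (∀ a : A, g (dA a) = dD (g a)) →
    (∀ ⦃i j : ℤ⦄ ⦃a b : A⦄, a ∈ 𝒜 i → b ∈ 𝒜 j →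
      g (brA a b) = mulD (g a) (g b) - ((-1 : k) ^ ((i + p) * (j + p))) • mulD (g b) (g a)) →
    (∀ ⦃i j : ℤ⦄ ⦃a b : A⦄, a ∈ 𝒜 i → b ∈ 𝒜 j →
      f (brA a b) = mulD (g a) (f b) - ((-1 : k) ^ ((i + p) * j)) • mulD (f b) (g a)) →
    (∀ ⦃i j : ℤ⦄ ⦃a b : A⦄, a ∈ 𝒜 i → b ∈ 𝒜 j →
      g (mulA a b) = mulD (f a) (g b) + ((-1 : k) ^ (i * j)) • mulD (f b) (g a)) →
    ∃! φ : E →ₗ[k] D, IsDGAlgHom ℰ mulE oneE dE 𝒟 mulD oneD dD φ ∧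
      φ ∘ₗ m = f ∧ φ ∘ₗ h = g

end DGPH

namespace DGPH

open TensorProduct

section Aux

variable {k : Type} [Field k] {A : Type} [AddCommGroup A] [Module k A]

private lemma sgn_mul (m n : ℤ) : (-1 : k) ^ m * (-1 : k) ^ n = (-1 : k) ^ (m + n) :=
  (zpow_add₀ (by norm_num) m n).symm

private lemma sgn_red (m n : ℤ) : (-1 : k) ^ (m + 2 * n) = (-1 : k) ^ m := by
  rw [← sgn_mul, Even.neg_one_zpow (n := 2 * n) ⟨n, by ring⟩, mul_one]

/-- Two linear maps out of `A` agreeing on all homogeneous elements agree. -/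
private lemma eq_on_total {𝒜 : ℤ → Submodule k A} (total : (⨆ i, 𝒜 i) = ⊤)
    {N : Type} [AddCommGroup N] [Module k N] {f g : A →ₗ[k] N}
    (h : ∀ ⦃i : ℤ⦄ ⦃x : A⦄, x ∈ 𝒜 i → f x = g x) (x : A) : f x = g x := by
  have hx : x ∈ ⨆ i, 𝒜 i := total ▸ Submodule.mem_top
  refine Submodule.iSup_induction 𝒜 (motive := fun x => f x = g x) hx
    (fun i x hx => h hx) (by simp) ?_
  intro x y hx hy
  simp [map_add, hx, hy]

/-- Two linear maps out of `A ⊗ A` agreeing on homogeneous simple tensors agree. -/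
private lemma tensor_eq_on_total {𝒜 : ℤ → Submodule k A} (total : (⨆ i, 𝒜 i) = ⊤)
    {f g : A ⊗[k] A →ₗ[k] A}
    (h : ∀ ⦃i j : ℤ⦄ ⦃x y : A⦄, x ∈ 𝒜 i → y ∈ 𝒜 j →
      f (x ⊗ₜ[k] y) = g (x ⊗ₜ[k] y)) : f = g := by
  apply TensorProduct.ext'
  intro x y
  have hx : (TensorProduct.curry f) x = (TensorProduct.curry g) x := by
    refine eq_on_total total (f := TensorProduct.curry f) (g := TensorProduct.curry g) ?_ x
    intro i x hxi
    apply LinearMap.ext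
    refine eq_on_total total ?_
    intro j y hyj
    simpa [TensorProduct.curry_apply] using h hxi hyj
  simpa [TensorProduct.curry_apply] using congrArg (fun F => F y) hx

/-- The Koszul sign twist operator on a graded module. -/
private lemma exists_sign_map (𝒜 : ℤ → Submodule k A) (indep : iSupIndep 𝒜)
    (total : (⨆ i, 𝒜 i) = ⊤) (c : ℤ → k) :
    ∃ σ : A →ₗ[k] A, ∀ ⦃i : ℤ⦄ ⦃x : A⦄, x ∈ 𝒜 i → σ x = c i • x := by
  have internal : DirectSum.IsInternal 𝒜 :=
    DirectSum.isInternal_submodule_of_iSupIndep_of_iSup_eq_top indep total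
  let e : (DirectSum ℤ (fun i => 𝒜 i)) ≃ₗ[k] A :=
    LinearEquiv.ofBijective (DirectSum.coeLinearMap 𝒜) internal
  refine ⟨(DirectSum.toModule k ℤ A (fun i => c i • (𝒜 i).subtype)) ∘ₗ e.symm.toLinearMap, ?_⟩
  intro i x hx
  have he : e.symm x = DirectSum.lof k ℤ (fun i => 𝒜 i) i ⟨x, hx⟩ := by
    apply e.injective
    simp [e, LinearEquiv.ofBijective_apply, DirectSum.lof_eq_of, DirectSum.coeLinearMap_of]
    exact (DirectSum.coeLinearMap_of (A := 𝒜) i ⟨x, hx⟩).symm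
  simp [he, DirectSum.toModule_lof]

variable {𝒜 : ℤ → Submodule k A} {mul : A →ₗ[k] A →ₗ[k] A} {one : A}
  {bracket : A →ₗ[k] A →ₗ[k] A} {d : A →ₗ[k] A}

private lemma bracket_one_right (hP : IsDGPoisson k A 𝒜 mul one bracket d 0) (x : A) :
    bracket x one = 0 := by
  have h : ∀ ⦃i : ℤ⦄ ⦃x : A⦄, x ∈ 𝒜 i →
      (LinearMap.flip bracket one) x = (0 : A →ₗ[k] A) x := by
    intro i x hx
    have h1 := hP.bracket_leibniz one hx hP.one_mem
    rw [hP.mul_one, hP.mul_one, hP.one_mul] at h1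
    have h2 : bracket x one + 0 = bracket x one + ((-1 : k) ^ ((i + 0) * 0)) • bracket x one := by
      rw [add_zero]; exact h1
    have h3 := add_left_cancel h2
    rw [mul_zero, zpow_zero, one_smul] at h3
    simpa [LinearMap.flip_apply] using h3.symm
  simpa [LinearMap.flip_apply] using eq_on_total hP.total h x

private lemma bracket_one_left (hP : IsDGPoisson k A 𝒜 mul one bracket d 0) (x : A) :
    bracket one x = 0 := by
  have h : ∀ ⦃j : ℤ⦄ ⦃x : A⦄, x ∈ 𝒜 j → (bracket one) x = (0 : A →ₗ[k] A) x := by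
    intro j x hx
    have h1 := hP.bracket_antisymm hP.one_mem hx
    rw [bracket_one_right hP] at h1
    simpa using h1
  simpa using eq_on_total hP.total h x

/-- Graded Leibniz rule in the first slot (bracket of degree 0):
`{yz, b} = y{z,b} + (-1)^{|b||z|}{y,b}z`. -/
private lemma mul_bracket (hP : IsDGPoisson k A 𝒜 mul one bracket d 0)
    {i' j jb : ℤ} {y z b : A} (hy : y ∈ 𝒜 i') (hz : z ∈ 𝒜 j) (hb : b ∈ 𝒜 jb) :
    bracket (mul y z) b =
      mul y (bracket z b) + ((-1 : k) ^ (jb * j)) • mul (bracket y b) z := by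
  have h1 := hP.bracket_antisymm (hP.mul_mem hy hz) hb
  have h2 := hP.bracket_leibniz z hb hy
  have h3 := hP.bracket_antisymm hb hy
  have h4 := hP.bracket_antisymm hb hz
  rw [h2, h3, h4] at h1
  simp only [add_zero, map_neg, map_smul, LinearMap.neg_apply, LinearMap.smul_apply,
    smul_neg, neg_neg, smul_add, smul_smul, neg_add] at h1 ⊢
  rw [h1]
  have c1 : (-1 : k) ^ ((i' + j) * jb) * (-1 : k) ^ (jb * i') = (-1 : k) ^ (jb * j) := by
    rw [sgn_mul, show (i' + j) * jb + jb * i' = jb * j + 2 * (i' * jb) by ring, sgn_red]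
  have c2 : (-1 : k) ^ ((i' + j) * jb) * ((-1 : k) ^ (jb * i') * (-1 : k) ^ (jb * j)) = 1 := by
    rw [sgn_mul, sgn_mul,
      show (i' + j) * jb + (jb * i' + jb * j) = 0 + 2 * (i' * jb + j * jb) by ring,
      sgn_red, zpow_zero]
  rw [c1, c2, one_smul]
  exact add_comm _ _

end Aux

/-- In a DG Poisson Hopf algebra (bracket of degree 0), for homogeneous
`b` one has `S(a₍₁₎){a₍₂₎, b} = -(-1)^{|b||a₍₂₎|}{S(a₍₁₎), b}a₍₂₎`, and for homogeneous `a`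
one has `{a, S(b₍₁₎)}b₍₂₎ = -(-1)^{|a||b₍₁₎|}S(b₍₁₎){a, b₍₂₎}` (Sweedler notation, with the
sign-twisted right-hand sides expressed by maps characterized on homogeneous tensors). -/
theorem antipode_bracket_identities {k : Type} [Field k]
    (A : Type) [AddCommGroup A] [Module k A]
    (𝒜 : ℤ → Submodule k A) (mul : A →ₗ[k] A →ₗ[k] A) (one : A)
    (bracket : A →ₗ[k] A →ₗ[k] A) (d : A →ₗ[k] A)
    (comul : A →ₗ[k] A ⊗[k] A) (counit : A →ₗ[k] k) (S : A →ₗ[k] A)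
    (hA : IsDGPoissonHopf k A 𝒜 mul one bracket d comul counit S) :
    (∀ ⦃jb : ℤ⦄ ⦃b : A⦄, b ∈ 𝒜 jb →
      ∃ E : A ⊗[k] A →ₗ[k] A,
        (∀ ⦃j : ℤ⦄ (a₁ : A) ⦃a₂ : A⦄, a₂ ∈ 𝒜 j →
          E (a₁ ⊗ₜ[k] a₂) = -(((-1 : k) ^ (jb * j)) • mul (bracket (S a₁) b) a₂)) ∧
        ∀ a : A,
          TensorProduct.lift mul
            ((TensorProduct.map S ((LinearMap.flip bracket) b)) (comul a)) = E (comul a)) ∧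
    (∀ ⦃ia : ℤ⦄ ⦃a : A⦄, a ∈ 𝒜 ia →
      ∃ E' : A ⊗[k] A →ₗ[k] A,
        (∀ ⦃j : ℤ⦄ ⦃b₁ : A⦄ (b₂ : A), b₁ ∈ 𝒜 j →
          E' (b₁ ⊗ₜ[k] b₂) = -(((-1 : k) ^ (ia * j)) • mul (S b₁) (bracket a b₂))) ∧
        ∀ b : A,
          TensorProduct.lift mul
            ((TensorProduct.map ((bracket a) ∘ₗ S) LinearMap.id) (comul b)) = E' (comul b)) := by
  have hP : IsDGPoisson k A 𝒜 mul one bracket d 0 := hA.toPoissonBialg.poisson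
  have total : (⨆ i, 𝒜 i) = ⊤ := hP.total
  have indep : iSupIndep 𝒜 := hP.indep
  constructor
  · -- First identity
    intro jb b hb
    obtain ⟨σ, hσ⟩ := exists_sign_map 𝒜 indep total (fun j => (-1 : k) ^ (jb * j))
    refine ⟨TensorProduct.lift (-((mul ∘ₗ ((LinearMap.flip bracket b) ∘ₗ S)).compl₂ σ)), ?_, ?_⟩
    · intro j a₁ a₂ ha₂
      simp only [TensorProduct.lift.tmul, LinearMap.neg_apply, LinearMap.compl₂_apply,
        LinearMap.comp_apply, LinearMap.flip_apply, hσ ha₂, map_smul]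
    · intro a
      set E : A ⊗[k] A →ₗ[k] A :=
        TensorProduct.lift (-((mul ∘ₗ ((LinearMap.flip bracket b) ∘ₗ S)).compl₂ σ)) with hE
      set L₁ : A ⊗[k] A →ₗ[k] A :=
        (TensorProduct.lift mul) ∘ₗ TensorProduct.map S (LinearMap.flip bracket b) with hL₁
      set G : A ⊗[k] A →ₗ[k] A :=
        (LinearMap.flip bracket b) ∘ₗ (TensorProduct.lift mul) ∘ₗ
          TensorProduct.map S LinearMap.id with hG
      have hGE : G = L₁ - E := by
        apply tensor_eq_on_total total
        intro i' j x y hx hy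
        have hSx : S x ∈ 𝒜 i' := hA.antipode_mem hx
        have key := mul_bracket hP hSx hy hb
        simp only [hG, hL₁, hE, LinearMap.comp_apply, LinearMap.sub_apply,
          TensorProduct.map_tmul, TensorProduct.lift.tmul, LinearMap.id_coe, id_eq,
          LinearMap.flip_apply, LinearMap.neg_apply, LinearMap.compl₂_apply, hσ hy,
          map_smul, sub_neg_eq_add]
        exact key
      have h0 : G (comul a) = 0 := by
        have := hA.antipode_left a
        simp only [hG, LinearMap.comp_apply, this, LinearMap.flip_apply, map_smul,
          LinearMap.smul_apply, bracket_one_left hP, smul_zero]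
      have := congrArg (fun F : A ⊗[k] A →ₗ[k] A => F (comul a)) hGE
      simp only [LinearMap.sub_apply] at this
      rw [h0] at this
      have h2 : L₁ (comul a) = E (comul a) := by
        have := this.symm
        rwa [sub_eq_zero] at this
      simpa [hL₁, LinearMap.comp_apply] using h2
  · -- Second identity
    intro ia a ha
    obtain ⟨σ, hσ⟩ := exists_sign_map 𝒜 indep total (fun j => (-1 : k) ^ (ia * j))
    refine ⟨TensorProduct.lift (-((mul ∘ₗ (S ∘ₗ σ)).compl₂ (bracket a))), ?_, ?_⟩
    · intro j b₁ b₂ hb₁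
      simp only [TensorProduct.lift.tmul, LinearMap.neg_apply, LinearMap.compl₂_apply,
        LinearMap.comp_apply, hσ hb₁, map_smul, LinearMap.smul_apply]
    · intro b
      set E' : A ⊗[k] A →ₗ[k] A :=
        TensorProduct.lift (-((mul ∘ₗ (S ∘ₗ σ)).compl₂ (bracket a))) with hE
      set L₁ : A ⊗[k] A →ₗ[k] A :=
        (TensorProduct.lift mul) ∘ₗ TensorProduct.map ((bracket a) ∘ₗ S) LinearMap.id with hL₁
      set G : A ⊗[k] A →ₗ[k] A :=
        (bracket a) ∘ₗ (TensorProduct.lift mul) ∘ₗ TensorProduct.map S LinearMap.id with hG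
      have hGE : G = L₁ - E' := by
        apply tensor_eq_on_total total
        intro i' j x y hx hy
        have hSx : S x ∈ 𝒜 i' := hA.antipode_mem hx
        have key := hP.bracket_leibniz y ha hSx
        rw [add_zero] at key
        simp only [hG, hL₁, hE, LinearMap.comp_apply, LinearMap.sub_apply,
          TensorProduct.map_tmul, TensorProduct.lift.tmul, LinearMap.id_coe, id_eq,
          LinearMap.neg_apply, LinearMap.compl₂_apply, hσ hx, map_smul,
          LinearMap.smul_apply, sub_neg_eq_add]
        exact key
      have h0 : G (comul b) = 0 := by
        have := hA.antipode_left b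
        simp only [hG, LinearMap.comp_apply, this, map_smul,
          bracket_one_right hP, smul_zero]
      have := congrArg (fun F : A ⊗[k] A →ₗ[k] A => F (comul b)) hGE
      simp only [LinearMap.sub_apply] at this
      rw [h0] at this
      have h2 : L₁ (comul b) = E' (comul b) := by
        have := this.symm
        rwa [sub_eq_zero] at this
      simpa [hL₁, LinearMap.comp_apply] using h2

end DGPH
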